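/- Let p > 1, ε > 0, C > 0, d* ∈ ℝ, and let M : [0, T) → (0, ∞) be differentiable with M'(t) ≥ ε and M'(t) ≥ −2d* + C·M(t)^{(p+1)/2} for all t ∈ [0, T). Then T < ∞. -/
import Mathlib


open MeasureTheory Real ENNReal

theorem stmt18 (T : ℝ≥0∞) (hT : 0 < T) (M : ℝ → ℝ) (p ε C dstar : ℝ)
    (hp : 1 < p) (hε : 0 < ε) (hC : 0 < C)
    (hdiff : ∀ t : ℝ, 0 ≤ t → ENNReal.ofReal t < T → DifferentiableAt ℝ M t)
    (hpos : ∀ t : ℝ, 0 ≤ t → ENNReal.ofReal t < T → 0 < M t)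
    (h1 : ∀ t : ℝ, 0 ≤ t → ENNReal.ofReal t < T → ε ≤ deriv M t)
    (h2 : ∀ t : ℝ, 0 ≤ t → ENNReal.ofReal t < T →
      -2 * dstar + C * M t ^ ((p + 1) / 2) ≤ deriv M t) :
    T < ⊤ := by
  by_contra hT'
  have hTtop : T = ⊤ := top_le_iff.mp (not_lt.mp hT')
  subst hTtop
  have hlt : ∀ t : ℝ, ENNReal.ofReal t < ⊤ := fun t => ofReal_lt_top
  set q : ℝ := (p + 1) / 2 with hqdef
  have hq : 1 < q := by rw [hqdef]; linarith
  have hd : ∀ t, 0 ≤ t → DifferentiableAt ℝ M t := fun t ht => hdiff t ht (hlt t)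
  have hpo : ∀ t, 0 ≤ t → 0 < M t := fun t ht => hpos t ht (hlt t)
  have h1' : ∀ t, 0 ≤ t → ε ≤ deriv M t := fun t ht => h1 t ht (hlt t)
  have h2' : ∀ t, 0 ≤ t → -2 * dstar + C * M t ^ q ≤ deriv M t :=
    fun t ht => h2 t ht (hlt t)
  -- linear growth: M y - M x ≥ ε (y - x) for 0 ≤ x ≤ y
  have hmono : ∀ x, 0 ≤ x → ∀ y, x ≤ y → ε * (y - x) ≤ M y - M x := by
    intro x hx y hxy
    refine (convex_Ici (0:ℝ)).mul_sub_le_image_sub_of_le_deriv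
      (fun t ht => (hd t ht).continuousAt.continuousWithinAt)
      (fun t ht => ?_) (fun t ht => ?_) x hx y (le_trans hx hxy) hxy
    · rw [interior_Ici] at ht
      exact (hd t ht.le).differentiableWithinAt
    · rw [interior_Ici] at ht
      exact h1' t ht.le
  -- threshold A with C * A^q ≥ 4 dstar
  set A : ℝ := max 1 ((4 * dstar / C) ^ (1 / q)) with hAdef
  have hA1 : (1:ℝ) ≤ A := le_max_left _ _
  have hA0 : (0:ℝ) < A := by linarith
  have hAq : 4 * dstar / C ≤ A ^ q := by
    rcases le_or_gt (4 * dstar / C) 0 with h | h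
    · exact h.trans (rpow_pos_of_pos hA0 q).le
    · have h2 : (4 * dstar / C) ^ (1 / q) ≤ A := le_max_right _ _
      have h3 : ((4 * dstar / C) ^ (1 / q)) ^ q ≤ A ^ q :=
        rpow_le_rpow (rpow_nonneg h.le _) h2 (by linarith)
      rwa [← rpow_mul h.le, one_div, inv_mul_cancel₀ (by linarith : q ≠ 0),
        Real.rpow_one] at h3
  -- time t₀ after which M ≥ A
  set t₀ : ℝ := max 0 ((A - M 0) / ε) with ht₀def
  have ht₀0 : 0 ≤ t₀ := le_max_left _ _
  have hMt₀ : A ≤ M t₀ := by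
    have h1 := hmono 0 le_rfl t₀ ht₀0
    have h2 : (A - M 0) / ε ≤ t₀ := le_max_right _ _
    have h3 : ε * ((A - M 0) / ε) ≤ ε * t₀ := by
      exact mul_le_mul_of_nonneg_left h2 hε.le
    rw [mul_div_cancel₀ _ (ne_of_gt hε)] at h3
    linarith
  have hMt : ∀ t, t₀ ≤ t → A ≤ M t := by
    intro t ht
    have := hmono t₀ ht₀0 t ht
    nlinarith
  -- slope bound: deriv M ≥ (C/2) M^q for t ≥ t₀
  have hslope : ∀ t, t₀ ≤ t → C / 2 * M t ^ q ≤ deriv M t := by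
    intro t ht
    have hMq : A ^ q ≤ M t ^ q := rpow_le_rpow hA0.le (hMt t ht) (by linarith)
    have h4 : 4 * dstar ≤ C * A ^ q := by
      rw [div_le_iff₀ hC] at hAq; linarith [hAq]
    have := h2' t (ht₀0.trans ht)
    nlinarith
  -- W = M ^ (1 - q)
  set W : ℝ → ℝ := fun s => M s ^ (1 - q) with hWdef
  have hWpos : ∀ t, 0 ≤ t → 0 < W t := fun t ht => rpow_pos_of_pos (hpo t ht) _
  have hWd : ∀ t, 0 ≤ t →
      HasDerivAt W (deriv M t * (1 - q) * M t ^ (1 - q - 1)) t := by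
    intro t ht
    exact ((hd t ht).hasDerivAt).rpow_const (Or.inl (hpo t ht).ne')
  set K : ℝ := (1 - q) * (C / 2) with hKdef
  have hKneg : K < 0 := mul_neg_of_neg_of_pos (by linarith) (by linarith)
  have hWderiv_le : ∀ t, t₀ ≤ t → deriv W t ≤ K := by
    intro t ht
    have ht0 : 0 ≤ t := ht₀0.trans ht
    rw [(hWd t ht0).deriv]
    have hm : 0 < M t := hpo t ht0
    have hmq : 0 < M t ^ q := rpow_pos_of_pos hm _
    have hmnq : 0 < M t ^ (1 - q - 1) := rpow_pos_of_pos hm _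
    have hprod : M t ^ q * M t ^ (1 - q - 1) = 1 := by
      rw [← rpow_add hm]
      norm_num
    have hdM := hslope t ht
    nlinarith [mul_le_mul_of_nonneg_right hdM hmnq.le]
  -- comparison on [t₀, ∞)
  have hcomp : ∀ y, t₀ ≤ y → W y - W t₀ ≤ K * (y - t₀) := by
    intro y hy
    refine (convex_Ici t₀).image_sub_le_mul_sub_of_deriv_le
      (fun t ht => ((hWd t (ht₀0.trans ht)).differentiableAt).continuousAt.continuousWithinAt)
      (fun t ht => ?_) (fun t ht => ?_) t₀ (Set.mem_Ici.mpr le_rfl) y (Set.mem_Ici.mpr hy) hy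
    · rw [interior_Ici] at ht
      exact ((hWd t (ht₀0.trans ht.le)).differentiableAt).differentiableWithinAt
    · rw [interior_Ici] at ht
      exact hWderiv_le t ht.le
  -- reach negativity of W
  set D : ℝ := (q - 1) * (C / 2) with hDdef
  have hD0 : 0 < D := mul_pos (by linarith) (by linarith)
  have hKD : K = -D := by rw [hKdef, hDdef]; ring
  set t₁ : ℝ := t₀ + (W t₀ + 1) / D with ht₁def
  have hWt₀ : 0 < W t₀ := hWpos t₀ ht₀0
  have ht₁ : t₀ ≤ t₁ := by
    rw [ht₁def]
    have : 0 ≤ (W t₀ + 1) / D := div_nonneg (by linarith) hD0.le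
    linarith
  have hfinal := hcomp t₁ ht₁
  have hKt : K * (t₁ - t₀) = -(W t₀ + 1) := by
    rw [hKD, ht₁def]
    field_simp
    ring
  rw [hKt] at hfinal
  have := hWpos t₁ (ht₀0.trans ht₁)
  linarith
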